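/- For a continuously differentiable function ω : [0, ρ*] → ℝ with 1 − β·ρ·ω(ρ) > 0 on [0, ρ*], the following integral identity holds: ∫₀^{ρ*} (ω(ρ) + β·ρ²·ω(ρ)·ω′(ρ))/(1 − β·ρ·ω(ρ)) dρ = −ρ*·ω(ρ*) − β⁻¹·log(1 − β·ρ*·ω(ρ*)) + ∫₀^{ρ*} ω(ρ) dρ. -/

import Mathlib

/-- Key integral identity of Lemma 2: for C¹ `ω` with
`1 − β ρ ω(ρ) > 0` on `[0, ρ*]`,
`∫₀^{ρ*} (ω + β ρ² ω ω′)/(1 − β ρ ω) dρ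
  = −ρ* ω(ρ*) − β⁻¹ log(1 − β ρ* ω(ρ*)) + ∫₀^{ρ*} ω`. -/
theorem stmt4 (β ρstar : ℝ) (ω : ℝ → ℝ)
    (hβ : 0 < β) (hρstar : 0 < ρstar)
    (hω : ContDiff ℝ 1 ω)
    (hpos : ∀ ρ ∈ Set.Icc (0 : ℝ) ρstar, 0 < 1 - β * ρ * ω ρ) :
    ∫ ρ in (0 : ℝ)..ρstar,
        (ω ρ + β * ρ ^ 2 * ω ρ * deriv ω ρ) / (1 - β * ρ * ω ρ)
      = -(ρstar * ω ρstar) - β⁻¹ * Real.log (1 - β * ρstar * ω ρstar)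
        + ∫ ρ in (0 : ℝ)..ρstar, ω ρ := by
  have hωc : Continuous ω := hω.continuous
  have hω' : Continuous (deriv ω) := (hω.iterate_deriv' 0 1).continuous
  set u : ℝ → ℝ := fun ρ => 1 - β * ρ * ω ρ with hu
  have hucont : Continuous u := by
    exact continuous_const.sub ((continuous_const.mul continuous_id).mul hωc)
  have hune : ∀ ρ ∈ Set.Icc (0:ℝ) ρstar, u ρ ≠ 0 := fun ρ h => (hpos ρ h).ne'
  set g : ℝ → ℝ := fun ρ => -(ρ * ω ρ) - β⁻¹ * Real.log (u ρ) with hg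
  set f : ℝ → ℝ := fun ρ => (ω ρ + β * ρ ^ 2 * ω ρ * deriv ω ρ) / u ρ with hf
  have hderiv : ∀ ρ ∈ Set.uIcc (0:ℝ) ρstar,
      HasDerivAt g (f ρ - ω ρ) ρ := by
    intro ρ hρ
    rw [Set.uIcc_of_le hρstar.le] at hρ
    have hωd : HasDerivAt ω (deriv ω ρ) ρ :=
      (hω.differentiable one_ne_zero ρ).hasDerivAt
    have h1 : HasDerivAt (fun x => x * ω x) (1 * ω ρ + ρ * deriv ω ρ) ρ :=
      (hasDerivAt_id ρ).mul hωd
    have h2 : HasDerivAt u (-(β * (1 * ω ρ + ρ * deriv ω ρ))) ρ := by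
      have h2a : HasDerivAt (fun x => β * (x * ω x)) (β * (1 * ω ρ + ρ * deriv ω ρ)) ρ :=
        h1.const_mul β
      have h2b := (hasDerivAt_const ρ (1:ℝ)).sub h2a
      simpa [hu, mul_assoc, Pi.sub_def] using h2b
    have h3 : HasDerivAt (fun x => Real.log (u x))
        (-(β * (1 * ω ρ + ρ * deriv ω ρ)) / u ρ) ρ := h2.log (hune ρ hρ)
    have h4 : HasDerivAt (fun x => -(x * ω x) - β⁻¹ * Real.log (u x))
        (-(1 * ω ρ + ρ * deriv ω ρ) - β⁻¹ * (-(β * (1 * ω ρ + ρ * deriv ω ρ)) / u ρ)) ρ :=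
      h1.neg.sub (h3.const_mul β⁻¹)
    convert h4 using 1
    have hu0 : u ρ ≠ 0 := hune ρ hρ
    have hβ0 : β ≠ 0 := hβ.ne'
    simp only [hf]
    field_simp
    ring
  have hfcont : ContinuousOn f (Set.uIcc (0:ℝ) ρstar) := by
    rw [Set.uIcc_of_le hρstar.le]
    apply ContinuousOn.div
    · exact (hωc.add (((continuous_const.mul (continuous_pow 2)).mul hωc).mul hω')).continuousOn
    · exact hucont.continuousOn
    · exact hune
  have hint1 : IntervalIntegrable f MeasureTheory.volume 0 ρstar :=
    hfcont.intervalIntegrable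
  have hintω : IntervalIntegrable ω MeasureTheory.volume 0 ρstar :=
    hωc.intervalIntegrable _ _
  have key : ∫ ρ in (0:ℝ)..ρstar, (f ρ - ω ρ) = g ρstar - g 0 :=
    intervalIntegral.integral_eq_sub_of_hasDerivAt hderiv (hint1.sub hintω)
  rw [intervalIntegral.integral_sub hint1 hintω] at key
  have hg0 : g 0 = 0 := by simp [hg, hu]
  have : ∫ ρ in (0:ℝ)..ρstar, f ρ = g ρstar + ∫ ρ in (0:ℝ)..ρstar, ω ρ := by
    rw [hg0, sub_zero] at key; linarith
  simpa [hf, hg, hu, sub_eq_add_neg] using this
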